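/- Let ξ > 0, μ ∈ ℝ, σ > 0, k > 0, and let X be a negative random variable with distribution function L_{2,ξ}(·; μ, σ). Then the k-th absolute moment of X exists and E(|X|^k) = e^{k(μ + σ/ξ)} · M_{Y^{−1}}(kσ/ξ; 1/ξ), where M_{Y^{−1}}(t; α) = α ∫_0^∞ x^{α−1} exp(−t/x − x^α) dx. -/

import Mathlib

open MeasureTheory Filter Real Set

/-- The log-GEV distribution function `L_{1,ξ}(x; μ, σ)` (positive support). -/
noncomputable def L1 (ξ μ σ x : ℝ) : ℝ :=
  if 0 < x then
    if 0 < 1 + (ξ / σ) * Real.log (Real.exp (-μ) * x) then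
      Real.exp (-(1 + (ξ / σ) * Real.log (Real.exp (-μ) * x)) ^ (-1 / ξ))
    else if 0 < ξ then 0 else 1
  else 0

/-- The negative log-GEV distribution function `L_{2,ξ}(x; μ, σ)` (negative support). -/
noncomputable def L2 (ξ μ σ x : ℝ) : ℝ :=
  if x < 0 then
    if 0 < 1 - (ξ / σ) * Real.log (Real.exp (-μ) * |x|) then
      Real.exp (-(1 - (ξ / σ) * Real.log (Real.exp (-μ) * |x|)) ^ (-1 / ξ))
    else if 0 < ξ then 0 else 1
  else 1

/-- `M_{Y⁻¹}(t; α) = α ∫_0^∞ x^{α-1} exp(-t/x - x^α) dx`, where `Y` is a standard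
Weibull random variable with shape parameter `α`. -/
noncomputable def weibullInvMgf (t α : ℝ) : ℝ :=
  α * ∫ x in Set.Ioi (0 : ℝ), x ^ (α - 1) * Real.exp (-t / x - x ^ α)

namespace Stmt6Aux

variable {t α : ℝ}

lemma arg_nonpos (ht : 0 < t) (hα : 0 < α) {x : ℝ} (hx : 0 < x) :
    -t / x - x ^ α ≤ 0 := by
  have h1 : 0 ≤ t / x := le_of_lt (div_pos ht hx)
  have h2 : 0 < x ^ α := Real.rpow_pos_of_pos hx α
  have : -t / x = -(t / x) := by ring
  linarith [this]

lemma Ef_le_one (ht : 0 < t) (hα : 0 < α) {x : ℝ} (hx : 0 < x) :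
    Real.exp (-t / x - x ^ α) ≤ 1 :=
  Real.exp_le_one_iff.mpr (arg_nonpos ht hα hx)

lemma contOn_Ef : ContinuousOn (fun x : ℝ => Real.exp (-t / x - x ^ α)) (Ioi 0) := by
  intro x hx
  have hx0 : (0:ℝ) < x := hx
  have h1 : ContinuousAt (fun x : ℝ => -t / x) x :=
    continuousAt_const.div continuousAt_id (ne_of_gt hx0)
  have h2 : ContinuousAt (fun x : ℝ => x ^ α) x :=
    Real.continuousAt_rpow_const x α (Or.inl (ne_of_gt hx0))
  exact (Real.continuous_exp.continuousAt.comp (h1.sub h2)).continuousWithinAt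

lemma contOn_rpow (p : ℝ) : ContinuousOn (fun x : ℝ => x ^ p) (Ioi 0) := by
  intro x hx
  exact (Real.continuousAt_rpow_const x p (Or.inl (ne_of_gt hx))).continuousWithinAt

/-- derivative of `-exp (-t/x - x^α)` -/
lemma hasDerivF (hα : 0 < α) {x : ℝ} (hx : 0 < x) :
    HasDerivAt (fun x : ℝ => -Real.exp (-t / x - x ^ α))
      (α * x ^ (α - 1) * Real.exp (-t / x - x ^ α)
        - t * (x ^ 2)⁻¹ * Real.exp (-t / x - x ^ α)) x := by
  have h1 : HasDerivAt (fun x : ℝ => -t / x) (t * (x ^ 2)⁻¹) x := by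
    have := (hasDerivAt_inv (ne_of_gt hx)).const_mul (-t)
    simpa [div_eq_mul_inv] using this.congr_deriv (by ring)
  have h2 : HasDerivAt (fun x : ℝ => x ^ α) (α * x ^ (α - 1)) x :=
    Real.hasDerivAt_rpow_const (Or.inl (ne_of_gt hx))
  have h3 : HasDerivAt (fun x : ℝ => -Real.exp (-t / x - x ^ α))
      (-(Real.exp (-t / x - x ^ α) * (t * (x ^ 2)⁻¹ - α * x ^ (α - 1)))) x :=
    ((h1.sub h2).exp).neg
  convert h3 using 1
  ring
variable {t α : ℝ}

lemma tendsto_arg_atBot_zero (ht : 0 < t) (hα : 0 < α) :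
    Tendsto (fun x : ℝ => -t / x - x ^ α) (nhdsWithin 0 (Ioi 0)) atBot := by
  have h1 : Tendsto (fun x : ℝ => -t / x) (nhdsWithin 0 (Ioi 0)) atBot := by
    have hinv : Tendsto (fun x : ℝ => x⁻¹) (nhdsWithin 0 (Ioi 0)) atTop :=
      tendsto_inv_nhdsGT_zero
    have := hinv.const_mul_atTop ht
    have hneg : Tendsto (fun x : ℝ => -(t * x⁻¹)) (nhdsWithin 0 (Ioi 0)) atBot :=
      tendsto_neg_atBot_iff.mpr this
    refine hneg.congr (fun x => by ring)
  have hev : ∀ᶠ x : ℝ in nhdsWithin 0 (Ioi 0), -(x ^ α) ≤ 0 := by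
    filter_upwards [self_mem_nhdsWithin] with x hx
    have : 0 < x ^ α := Real.rpow_pos_of_pos hx α
    linarith
  have := tendsto_atBot_add_right_of_ge' _ (0:ℝ) h1 hev
  refine this.congr (fun x => by ring)

lemma tendstoF_zero (ht : 0 < t) (hα : 0 < α) :
    Tendsto (fun x : ℝ => -Real.exp (-t / x - x ^ α)) (nhdsWithin 0 (Ioi 0)) (nhds 0) := by
  have h := Real.tendsto_exp_atBot.comp (tendsto_arg_atBot_zero ht hα)
  simpa using h.neg

lemma tendsto_arg_atBot_top (ht : 0 < t) (hα : 0 < α) :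
    Tendsto (fun x : ℝ => -t / x - x ^ α) atTop atBot := by
  have h2 : Tendsto (fun x : ℝ => -(x ^ α)) atTop atBot :=
    tendsto_neg_atBot_iff.mpr (tendsto_rpow_atTop hα)
  have hev : ∀ᶠ x : ℝ in atTop, -t / x ≤ 0 := by
    filter_upwards [eventually_gt_atTop (0:ℝ)] with x hx
    have : 0 ≤ t / x := le_of_lt (div_pos ht hx)
    have hrw : -t / x = -(t / x) := by ring
    linarith [hrw]
  have := tendsto_atBot_add_left_of_ge' _ (0:ℝ) hev h2
  refine this.congr (fun x => by ring)

lemma tendstoF_top (ht : 0 < t) (hα : 0 < α) :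
    Tendsto (fun x : ℝ => -Real.exp (-t / x - x ^ α)) atTop (nhds 0) := by
  have h := Real.tendsto_exp_atBot.comp (tendsto_arg_atBot_top ht hα)
  simpa using h.neg
variable {t α : ℝ}

lemma sq_quarter_le_exp {u : ℝ} (hu : 0 ≤ u) : u ^ 2 / 4 ≤ Real.exp u := by
  have h : u / 2 ≤ Real.exp (u / 2) := by
    have := Real.add_one_le_exp (u / 2); linarith
  have h2 : (u / 2) * (u / 2) ≤ Real.exp (u / 2) * Real.exp (u / 2) :=
    mul_le_mul h h (by linarith) (Real.exp_nonneg _)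
  rw [← Real.exp_add] at h2
  calc u ^ 2 / 4 = (u / 2) * (u / 2) := by ring
    _ ≤ Real.exp (u / 2 + u / 2) := h2
    _ = Real.exp u := by ring_nf

lemma A_le (ht : 0 < t) (hα : 0 < α) {x : ℝ} (hx : 0 < x) :
    t * (x ^ 2)⁻¹ * Real.exp (-t / x - x ^ α) ≤ 4 / t := by
  have hx2 : (0:ℝ) < x ^ 2 := by positivity
  have hrp : 0 < x ^ α := Real.rpow_pos_of_pos hx α
  have h1 : Real.exp (-t / x - x ^ α) ≤ (Real.exp (t / x))⁻¹ := by
    rw [← Real.exp_neg]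
    apply Real.exp_le_exp.mpr
    have : -t / x = -(t / x) := by ring
    linarith
  have h2 : t ^ 2 / x ^ 2 / 4 ≤ Real.exp (t / x) := by
    have := sq_quarter_le_exp (u := t / x) (by positivity)
    calc t ^ 2 / x ^ 2 / 4 = (t / x) ^ 2 / 4 := by rw [div_pow]
      _ ≤ Real.exp (t / x) := this
  have h3 : (Real.exp (t / x))⁻¹ ≤ (t ^ 2 / x ^ 2 / 4)⁻¹ := by
    apply inv_anti₀ (by positivity) h2
  have h4 : (t ^ 2 / x ^ 2 / 4)⁻¹ = 4 * x ^ 2 / t ^ 2 := by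
    field_simp
  calc t * (x ^ 2)⁻¹ * Real.exp (-t / x - x ^ α)
      ≤ t * (x ^ 2)⁻¹ * (4 * x ^ 2 / t ^ 2) := by
        apply mul_le_mul_of_nonneg_left (le_trans h1 (h4 ▸ h3)) (by positivity)
    _ = 4 / t := by field_simp

lemma intA (ht : 0 < t) (hα : 0 < α) :
    IntegrableOn (fun x : ℝ => t * (x ^ 2)⁻¹ * Real.exp (-t / x - x ^ α)) (Ioi 0) := by
  have hcont : ContinuousOn (fun x : ℝ => t * (x ^ 2)⁻¹ * Real.exp (-t / x - x ^ α)) (Ioi 0) := by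
    apply ContinuousOn.mul ?_ contOn_Ef
    apply continuousOn_const.mul
    intro x hx
    exact ((continuousAt_id.pow 2).inv₀ (pow_ne_zero 2 (ne_of_gt (show (0:ℝ) < x from hx)))).continuousWithinAt
  have h1 : IntegrableOn (fun x : ℝ => t * (x ^ 2)⁻¹ * Real.exp (-t / x - x ^ α)) (Ioc 0 1) := by
    apply Integrable.mono' (g := fun _ => 4 / t)
    · exact integrableOn_const measure_Ioc_lt_top.ne
    · exact ((hcont.mono Ioc_subset_Ioi_self).aestronglyMeasurable measurableSet_Ioc)
    · rw [ae_restrict_iff' measurableSet_Ioc]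
      filter_upwards with x hx
      have hx0 : 0 < x := hx.1
      rw [Real.norm_eq_abs, abs_of_nonneg (by positivity)]
      exact A_le ht hα hx0
  have h2 : IntegrableOn (fun x : ℝ => t * (x ^ 2)⁻¹ * Real.exp (-t / x - x ^ α)) (Ioi 1) := by
    apply Integrable.mono' (g := fun x => t * x ^ (-2:ℝ))
    · exact (integrableOn_Ioi_rpow_of_lt (by norm_num) one_pos).const_mul t
    · exact ((hcont.mono (Ioi_subset_Ioi zero_le_one)).aestronglyMeasurable measurableSet_Ioi)
    · rw [ae_restrict_iff' measurableSet_Ioi]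
      filter_upwards with x hx
      have hx0 : (0:ℝ) < x := lt_trans one_pos hx
      have hrw : x ^ (-2:ℝ) = (x ^ 2)⁻¹ := by
        rw [show ((-2:ℝ)) = -((2:ℕ):ℝ) by norm_num, Real.rpow_neg hx0.le, Real.rpow_natCast]
      rw [Real.norm_eq_abs, abs_of_nonneg (by positivity), hrw]
      have hE : Real.exp (-t / x - x ^ α) ≤ 1 := Ef_le_one ht hα hx0
      calc t * (x ^ 2)⁻¹ * Real.exp (-t / x - x ^ α) ≤ t * (x ^ 2)⁻¹ * 1 := by
            apply mul_le_mul_of_nonneg_left hE (by positivity)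
        _ = t * (x ^ 2)⁻¹ := by ring
  have := h1.union h2
  rwa [Ioc_union_Ioi_eq_Ioi zero_le_one] at this

lemma hasDerivG (hα : 0 < α) {x : ℝ} (hx : 0 < x) :
    HasDerivAt (fun x : ℝ => -Real.exp (-(x ^ α)))
      (α * x ^ (α - 1) * Real.exp (-(x ^ α))) x := by
  have h2 : HasDerivAt (fun x : ℝ => x ^ α) (α * x ^ (α - 1)) x :=
    Real.hasDerivAt_rpow_const (Or.inl (ne_of_gt hx))
  have h3 : HasDerivAt (fun x : ℝ => -Real.exp (-(x ^ α)))
      (-(Real.exp (-(x ^ α)) * -(α * x ^ (α - 1)))) x :=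
    (h2.neg.exp).neg
  convert h3 using 1
  ring

lemma intB (ht : 0 < t) (hα : 0 < α) :
    IntegrableOn (fun x : ℝ => α * x ^ (α - 1) * Real.exp (-t / x - x ^ α)) (Ioi 0) := by
  have hcont : ContinuousOn (fun x : ℝ => α * x ^ (α - 1) * Real.exp (-t / x - x ^ α)) (Ioi 0) :=
    (continuousOn_const.mul (contOn_rpow (α - 1))).mul contOn_Ef
  have h1 : IntegrableOn (fun x : ℝ => α * x ^ (α - 1) * Real.exp (-t / x - x ^ α)) (Ioc 0 1) := by
    apply Integrable.mono' (g := fun x => α * x ^ (α - 1))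
    · have := intervalIntegral.intervalIntegrable_rpow' (a := 0) (b := 1) (r := α - 1) (by linarith)
      exact ((intervalIntegrable_iff_integrableOn_Ioc_of_le zero_le_one).mp this).const_mul α
    · exact ((hcont.mono Ioc_subset_Ioi_self).aestronglyMeasurable measurableSet_Ioc)
    · rw [ae_restrict_iff' measurableSet_Ioc]
      filter_upwards with x hx
      have hx0 : 0 < x := hx.1
      have hrp : 0 ≤ x ^ (α - 1) := (Real.rpow_pos_of_pos hx0 _).le
      rw [Real.norm_eq_abs, abs_of_nonneg (by positivity)]
      calc α * x ^ (α - 1) * Real.exp (-t / x - x ^ α) ≤ α * x ^ (α - 1) * 1 :=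
            mul_le_mul_of_nonneg_left (Ef_le_one ht hα hx0) (by positivity)
        _ = α * x ^ (α - 1) := by ring
  have h2 : IntegrableOn (fun x : ℝ => α * x ^ (α - 1) * Real.exp (-t / x - x ^ α)) (Ioi 1) := by
    have hg : IntegrableOn (fun x : ℝ => α * x ^ (α - 1) * Real.exp (-(x ^ α))) (Ioi 1) := by
      apply integrableOn_Ioi_deriv_of_nonneg' (g := fun x : ℝ => -Real.exp (-(x ^ α)))
      · intro x hx
        exact hasDerivG hα (lt_of_lt_of_le one_pos hx)
      · intro x hx
        have hx0 : (0:ℝ) < x := lt_trans one_pos hx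
        have := Real.rpow_pos_of_pos hx0 (α - 1)
        positivity
      · have harg : Tendsto (fun x : ℝ => -(x ^ α)) atTop atBot :=
          tendsto_neg_atBot_iff.mpr (tendsto_rpow_atTop hα)
        have h := Real.tendsto_exp_atBot.comp harg
        simpa using h.neg
    apply Integrable.mono' hg
    · exact ((hcont.mono (Ioi_subset_Ioi zero_le_one)).aestronglyMeasurable measurableSet_Ioi)
    · rw [ae_restrict_iff' measurableSet_Ioi]
      filter_upwards with x hx
      have hx0 : (0:ℝ) < x := lt_trans one_pos hx
      have hrp : 0 ≤ x ^ (α - 1) := (Real.rpow_pos_of_pos hx0 _).le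
      rw [Real.norm_eq_abs, abs_of_nonneg (by positivity)]
      apply mul_le_mul_of_nonneg_left _ (by positivity)
      apply Real.exp_le_exp.mpr
      have : 0 < t / x := div_pos ht hx0
      have hrw : -t / x = -(t / x) := by ring
      linarith [hrw]
  have := h1.union h2
  rwa [Ioc_union_Ioi_eq_Ioi zero_le_one] at this

variable {t α : ℝ}

lemma keyIBP (ht : 0 < t) (hα : 0 < α) :
    ∫ x in Ioi (0:ℝ), t * (x ^ 2)⁻¹ * Real.exp (-t / x - x ^ α)
      = ∫ x in Ioi (0:ℝ), α * x ^ (α - 1) * Real.exp (-t / x - x ^ α) := by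
  set F : ℝ → ℝ := fun x => -Real.exp (-t / x - x ^ α) with hF
  set D : ℝ → ℝ := fun x => α * x ^ (α - 1) * Real.exp (-t / x - x ^ α)
      - t * (x ^ 2)⁻¹ * Real.exp (-t / x - x ^ α) with hD
  have hDint : IntegrableOn D (Ioi 0) := (intB ht hα).sub (intA ht hα)
  have hIoi1 : ∫ x in Ioi (1:ℝ), D x = 0 - F 1 := by
    apply integral_Ioi_of_hasDerivAt_of_tendsto
    · exact (hasDerivF hα one_pos).continuousAt.continuousWithinAt
    · intro x hx; exact hasDerivF hα (lt_trans one_pos hx)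
    · exact hDint.mono_set (Ioi_subset_Ioi zero_le_one)
    · exact tendstoF_top ht hα
  have hIoc : ∫ x in Ioc (0:ℝ) 1, D x = F 1 - 0 := by
    set s : ℕ → Set ℝ := fun n => Ioc (1 / (n + 1) : ℝ) 1 with hs
    have hsm : ∀ n, MeasurableSet (s n) := fun n => measurableSet_Ioc
    have hmono : Monotone s := by
      intro m n hmn
      apply Ioc_subset_Ioc _ le_rfl
      apply one_div_le_one_div_of_le (by positivity)
      have : (m:ℝ) ≤ n := Nat.cast_le.mpr hmn
      linarith
    have hunion : (⋃ n, s n) = Ioc (0:ℝ) 1 := by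
      ext x; simp only [mem_iUnion, hs, mem_Ioc]
      constructor
      · rintro ⟨n, h1, h2⟩
        refine ⟨lt_trans (by positivity) h1, h2⟩
      · rintro ⟨h1, h2⟩
        obtain ⟨n, hn⟩ := exists_nat_one_div_lt h1
        exact ⟨n, hn, h2⟩
    have hDIoc : IntegrableOn D (Ioc (0:ℝ) 1) := hDint.mono_set Ioc_subset_Ioi_self
    have hlim := tendsto_setIntegral_of_monotone hsm hmono (hunion ▸ hDIoc)
    rw [hunion] at hlim
    have hseq : ∀ n : ℕ, ∫ x in s n, D x = F 1 - F (1 / (n + 1)) := by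
      intro n
      have ha : (0:ℝ) < 1 / (n + 1) := by positivity
      have hab : (1 / (n + 1) : ℝ) ≤ 1 := by
        rw [div_le_one (by positivity)]
        have : (0:ℝ) ≤ n := Nat.cast_nonneg n
        linarith
      have hsub : Ioc (1 / (n + 1) : ℝ) 1 ⊆ Ioi 0 := fun x hx => lt_trans ha hx.1
      have hFTC := intervalIntegral.integral_eq_sub_of_hasDerivAt (f := F) (f' := D)
        (fun x hx => by
          have hx0 : (0:ℝ) < x := by
            rcases hx with ⟨hx1, _⟩
            rw [min_eq_left hab] at hx1
            exact lt_of_lt_of_le ha hx1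
          exact hasDerivF hα hx0)
        (by
          rw [intervalIntegrable_iff_integrableOn_Ioc_of_le hab]
          exact hDint.mono_set hsub)
      rw [intervalIntegral.integral_of_le hab] at hFTC
      exact hFTC
    have hlim2 : Tendsto (fun n : ℕ => ∫ x in s n, D x) atTop (nhds (F 1 - 0)) := by
      simp only [hseq]
      apply Tendsto.sub tendsto_const_nhds
      have hseq0 : Tendsto (fun n : ℕ => (1 / (n + 1) : ℝ)) atTop (nhdsWithin 0 (Ioi 0)) := by
        apply tendsto_nhdsWithin_of_tendsto_nhds_of_eventually_within
        · exact tendsto_one_div_add_atTop_nhds_zero_nat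
        · filter_upwards with n
          exact mem_Ioi.mpr (by positivity)
      exact (tendstoF_zero ht hα).comp hseq0
    exact tendsto_nhds_unique hlim hlim2
  have hsplit : ∫ x in Ioi (0:ℝ), D x = (∫ x in Ioc (0:ℝ) 1, D x) + ∫ x in Ioi (1:ℝ), D x := by
    rw [← Ioc_union_Ioi_eq_Ioi (zero_le_one (α := ℝ))]
    apply setIntegral_union (Ioc_disjoint_Ioi le_rfl) measurableSet_Ioi
    · exact hDint.mono_set Ioc_subset_Ioi_self
    · exact hDint.mono_set (Ioi_subset_Ioi zero_le_one)
  rw [hIoc, hIoi1] at hsplit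
  have hzero : ∫ x in Ioi (0:ℝ), D x = 0 := by rw [hsplit]; ring
  have := integral_sub (intB ht hα) (intA ht hα)
  rw [hD] at hzero
  rw [this] at hzero
  linarith

lemma hasDeriv_neg_div (t : ℝ) {x : ℝ} (hx : x ≠ 0) :
    HasDerivAt (fun x : ℝ => -t / x) (t * (x ^ 2)⁻¹) x := by
  have := (hasDerivAt_inv hx).const_mul (-t)
  simpa [div_eq_mul_inv] using this.congr_deriv (by ring)


end Stmt6Aux

/-- For `ξ > 0`, `σ > 0`, `k > 0`, if `X` is a negative random
variable with distribution function `L_{2,ξ}(·; μ, σ)`, then the `k`-th absolute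
moment of `X` exists and `E(|X|^k) = e^{k(μ + σ/ξ)} M_{Y⁻¹}(kσ/ξ; 1/ξ)`. -/
theorem stmt_6 {Ω : Type*} [MeasurableSpace Ω] (P : Measure Ω) [IsProbabilityMeasure P]
    (ξ μ σ k : ℝ) (hξ : 0 < ξ) (hσ : 0 < σ) (hk : 0 < k)
    (X : Ω → ℝ) (hXm : Measurable X) (hXneg : ∀ ω, X ω < 0)
    (hdf : ∀ x : ℝ, (P {ω | X ω ≤ x}).toReal = L2 ξ μ σ x) :
    Integrable (fun ω => |X ω| ^ k) P ∧
      ∫ ω, |X ω| ^ k ∂P =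
        Real.exp (k * (μ + σ / ξ)) * weibullInvMgf (k * σ / ξ) (1 / ξ) := by
  set t : ℝ := k * σ / ξ with hts
  set αp : ℝ := 1 / ξ with hαs
  have ht : 0 < t := by rw [hts]; positivity
  have hα : 0 < αp := by rw [hαs]; positivity
  set M : ℝ := μ + σ / ξ with hM
  set Ck : ℝ := Real.exp (k * M) with hCk
  have hCk0 : 0 < Ck := Real.exp_pos _
  -- Step 1: L2 vanishes at -exp M
  have hL2C : L2 ξ μ σ (-(Real.exp M)) = 0 := by
    rw [L2, if_pos (neg_lt_zero.mpr (Real.exp_pos _))]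
    have habs : |(-(Real.exp M))| = Real.exp M := by
      rw [abs_neg, abs_of_pos (Real.exp_pos _)]
    rw [habs, show Real.exp (-μ) * Real.exp M = Real.exp (σ / ξ) by
      rw [← Real.exp_add]; congr 1; rw [hM]; ring]
    rw [Real.log_exp, show 1 - ξ / σ * (σ / ξ) = 0 by field_simp; norm_num]
    rw [if_neg (lt_irrefl (0:ℝ)), if_pos hξ]
  have hPzero : P {ω | X ω ≤ -(Real.exp M)} = 0 := by
    have h := hdf (-(Real.exp M))
    rw [hL2C, ENNReal.toReal_eq_zero_iff] at h
    exact h.resolve_right (measure_ne_top P _)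
  have hae : ∀ᵐ ω ∂P, -(Real.exp M) < X ω := by
    rw [ae_iff]
    have hs : {ω | ¬ -(Real.exp M) < X ω} = {ω | X ω ≤ -(Real.exp M)} := by
      ext ω; simp [not_lt]
    rw [hs]; exact hPzero
  -- Step 2: integrability
  have hfnn : ∀ ω, 0 ≤ |X ω| ^ k := fun ω => Real.rpow_nonneg (abs_nonneg _) k
  have hfm : AEStronglyMeasurable (fun ω => |X ω| ^ k) P :=
    ((Real.continuous_rpow_const hk.le).measurable.comp hXm.abs).aestronglyMeasurable
  have hbound : ∀ᵐ ω ∂P, ‖|X ω| ^ k‖ ≤ Ck := by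
    filter_upwards [hae] with ω hω
    rw [Real.norm_eq_abs, abs_of_nonneg (hfnn ω)]
    have h1 : |X ω| ≤ Real.exp M := by
      rw [abs_of_neg (hXneg ω)]; linarith
    calc |X ω| ^ k ≤ (Real.exp M) ^ k := Real.rpow_le_rpow (abs_nonneg _) h1 hk.le
      _ = Ck := by
          rw [Real.rpow_def_of_pos (Real.exp_pos _), Real.log_exp, hCk, mul_comm]
  have hInt : Integrable (fun ω => |X ω| ^ k) P :=
    Integrable.mono' (integrable_const Ck) hfm hbound
  refine ⟨hInt, ?_⟩
  -- Step 3: layer cake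
  have hlayer := hInt.integral_eq_integral_meas_le (ae_of_all _ hfnn)
  rw [hlayer]
  -- Step 4: pointwise identification of the tail probability
  set g : ℝ → ℝ := fun s =>
    Real.exp (-(1 - ξ / σ * Real.log (Real.exp (-μ) * s ^ k⁻¹)) ^ (-1 / ξ)) with hg
  have hpoint : ∀ s ∈ Ioi (0:ℝ),
      (P {a | s ≤ |X a| ^ k}).toReal = indicator (Ioo 0 Ck) g s := by
    intro s hs
    have hs0 : (0:ℝ) < s := hs
    set y : ℝ := s ^ k⁻¹ with hy
    have hy0 : 0 < y := Real.rpow_pos_of_pos hs0 _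
    have hset : {a | s ≤ |X a| ^ k} = {ω | X ω ≤ -y} := by
      ext ω
      simp only [mem_setOf_eq]
      rw [← Real.rpow_inv_le_iff_of_pos hs0.le (abs_nonneg _) hk,
        abs_of_neg (hXneg ω), ← hy, le_neg]
    rw [hset, hdf, L2, if_pos (neg_lt_zero.mpr hy0)]
    have habs : |(-y)| = y := by rw [abs_neg, abs_of_pos hy0]
    rw [habs]
    have hlog : Real.log (Real.exp (-μ) * y) = -μ + k⁻¹ * Real.log s := by
      rw [Real.log_mul (Real.exp_ne_zero _) (ne_of_gt hy0), Real.log_exp, hy,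
        Real.log_rpow hs0]
    have hkey : 1 - ξ / σ * Real.log (Real.exp (-μ) * y)
        = ξ / σ * (σ / ξ - (-μ + k⁻¹ * Real.log s)) := by
      rw [hlog]; field_simp
    by_cases hcase : s < Ck
    · have hlogs : Real.log s < k * M := by
        have := Real.log_lt_log hs0 hcase
        rwa [hCk, Real.log_exp] at this
      have hpos : 0 < 1 - ξ / σ * Real.log (Real.exp (-μ) * y) := by
        rw [hkey]
        apply mul_pos (by positivity)
        rw [hM] at hlogs
        have hk' : k⁻¹ * Real.log s < μ + σ / ξ := by
          have h2 := mul_lt_mul_of_pos_left hlogs (inv_pos.mpr hk)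
          rwa [inv_mul_cancel_left₀ hk.ne'] at h2
        linarith
      rw [if_pos hpos, indicator_of_mem (mem_Ioo.mpr ⟨hs0, hcase⟩), hg]
    · have hlogs : k * M ≤ Real.log s := by
        have h1 : Ck ≤ s := not_lt.mp hcase
        have := Real.log_le_log hCk0 h1
        rwa [hCk, Real.log_exp] at this
      have hnpos : ¬ 0 < 1 - ξ / σ * Real.log (Real.exp (-μ) * y) := by
        rw [hkey, not_lt]
        apply mul_nonpos_of_nonneg_of_nonpos (by positivity)
        rw [hM] at hlogs
        have hk' : μ + σ / ξ ≤ k⁻¹ * Real.log s := by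
          have h2 := mul_le_mul_of_nonneg_left hlogs (inv_pos.mpr hk).le
          rwa [inv_mul_cancel_left₀ hk.ne'] at h2
        linarith
      rw [if_neg hnpos, if_pos hξ,
        indicator_of_notMem (fun hmem => hcase hmem.2)]
  simp only [measureReal_def]
  rw [setIntegral_congr_fun measurableSet_Ioi hpoint,
    setIntegral_indicator measurableSet_Ioo,
    inter_eq_self_of_subset_right Ioo_subset_Ioi_self]
  -- Step 5: change of variables s = Ck * exp (-t/x)
  set ψ : ℝ → ℝ := fun x => Ck * Real.exp (-t / x) with hψ
  set ψ' : ℝ → ℝ := fun x => Ck * (Real.exp (-t / x) * (t * (x ^ 2)⁻¹)) with hψ'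
  have himage : ψ '' Ioi 0 = Ioo 0 Ck := by
    apply Subset.antisymm
    · rintro s ⟨x, hx, rfl⟩
      have hx0 : (0:ℝ) < x := hx
      constructor
      · positivity
      · have : Real.exp (-t / x) < 1 := by
          apply Real.exp_lt_one_iff.mpr
          rw [show -t / x = -(t / x) by ring]
          exact neg_lt_zero.mpr (div_pos ht hx0)
        calc Ck * Real.exp (-t / x) < Ck * 1 := by
              exact mul_lt_mul_of_pos_left this hCk0
          _ = Ck := mul_one Ck
    · rintro s ⟨hs0, hsCk⟩
      have hden : 0 < k * M - Real.log s := by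
        have := Real.log_lt_log hs0 hsCk
        rw [hCk, Real.log_exp] at this
        linarith
      refine ⟨t / (k * M - Real.log s), div_pos ht hden, ?_⟩
      have harg : -t / (t / (k * M - Real.log s)) = Real.log s - k * M := by
        field_simp
        ring
      rw [hψ]
      simp only
      rw [harg, show Real.log s - k * M = Real.log s + -(k * M) by ring,
        Real.exp_add, Real.exp_neg, ← hCk, Real.exp_log hs0]
      field_simp
  have hinj : InjOn ψ (Ioi 0) := by
    apply StrictMonoOn.injOn
    intro x hx z hz hxz
    have hx0 : (0:ℝ) < x := hx
    have hz0 : (0:ℝ) < z := hz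
    apply mul_lt_mul_of_pos_left _ hCk0
    apply Real.exp_lt_exp.mpr
    rw [show -t / x = -(t / x) by ring, show -t / z = -(t / z) by ring]
    exact neg_lt_neg (div_lt_div_of_pos_left ht hx0 hxz)
  have hderiv : ∀ x ∈ Ioi (0:ℝ), HasDerivWithinAt ψ (ψ' x) (Ioi 0) x := by
    intro x hx
    have hx0 : (0:ℝ) < x := hx
    exact (((Stmt6Aux.hasDeriv_neg_div t (ne_of_gt hx0)).exp).const_mul Ck).hasDerivWithinAt
  rw [← himage, integral_image_eq_integral_abs_deriv_smul measurableSet_Ioi hderiv hinj g]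
  -- Step 6: simplify the integrand
  have hsimp : ∀ x ∈ Ioi (0:ℝ),
      |ψ' x| • g (ψ x) = Ck * (t * (x ^ 2)⁻¹ * Real.exp (-t / x - x ^ αp)) := by
    intro x hx
    have hx0 : (0:ℝ) < x := hx
    have habs : |ψ' x| = ψ' x := by
      rw [hψ']; apply abs_of_pos; positivity
    have hψx : ψ x = Real.exp (k * M + -t / x) := by
      rw [hψ, hCk]; simp only; rw [Real.exp_add]
    have hpow : (ψ x) ^ k⁻¹ = Real.exp ((k * M + -t / x) * k⁻¹) := by
      rw [hψx, Real.rpow_def_of_pos (Real.exp_pos _), Real.log_exp]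
    have hgψ : g (ψ x) = Real.exp (-(x ^ αp)) := by
      rw [hg]
      simp only
      rw [hpow, ← Real.exp_add, Real.log_exp]
      have hc : 1 - ξ / σ * (-μ + (k * M + -t / x) * k⁻¹) = x⁻¹ := by
        rw [hM, hts]; field_simp; ring
      rw [hc]
      congr 2
      rw [Real.inv_rpow hx0.le, hαs, show (-1 : ℝ) / ξ = -(1 / ξ) by ring,
        Real.rpow_neg hx0.le, inv_inv]
    rw [habs, hgψ, smul_eq_mul, hψ']
    simp only
    rw [show -t / x - x ^ αp = -t / x + -(x ^ αp) by ring, Real.exp_add]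
    ring
  rw [setIntegral_congr_fun measurableSet_Ioi hsimp, integral_const_mul,
    Stmt6Aux.keyIBP ht hα, weibullInvMgf]
  congr 1
  rw [← integral_const_mul]
  exact setIntegral_congr_fun measurableSet_Ioi (fun x _ => by ring)
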